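/- Fix an integer r ≥ 1, a constant c ≥ 2, and gains l_1,…,l_r > 0. Then for each i = 1,…,r there exists a constant k_i > 0, independent of κ, such that for every κ ∈ [-1/r, 1/r] (with p_j = 1 + (j-1)κ) and every z ∈ ℝ^r: W_i(z)^{(c+1)/(c+p_i)} ≤ k_i·(Σ_{j=1}^i |z_j|^{c/p_j})^{(c+1)/c}. -/

import Mathlib

/-- The `i`-th coordinate (0-based) of `z ∈ ℝ^r`, extended by `0` out of range. -/
noncomputable def coord (r : ℕ) (z : Fin r → ℝ) (i : ℕ) : ℝ :=
  if h : i < r then z ⟨i, h⟩ else 0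

/-- `Ssum r κ c i z = Σ_{j=1}^{i} |z_j|^{c/p_j}` with `p_j = 1 + (j-1)κ` (paper 1-based
indices; `k` below is the 0-based index `j-1`). -/
noncomputable def Ssum (r : ℕ) (κ c : ℝ) (i : ℕ) (z : Fin r → ℝ) : ℝ :=
  ∑ k ∈ Finset.range i, |coord r z k| ^ (c / (1 + (k : ℝ) * κ))

/-- The recursively defined virtual controls: `v_0 = 0` and
`v_i = -l_i N_i sign(z_i - v_{i-1})` with `N_i = (Ssum_i)^{(p_i+κ)/c}`, `p_i = 1 + (i-1)κ`.
The feedback is `ω_κ = vrec r κ c l r`. -/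
noncomputable def vrec (r : ℕ) (κ c : ℝ) (l : ℕ → ℝ) : ℕ → (Fin r → ℝ) → ℝ
  | 0 => fun _ => 0
  | i + 1 => fun z =>
      -(l (i + 1)) * (Ssum r κ c (i + 1) z) ^ ((1 + (i : ℝ) * κ + κ) / c) *
        Real.sign (coord r z i - vrec r κ c l i z)

/-- `⌊x⌉^β = |x|^β sign(x)`. -/
noncomputable def sgnPow (x β : ℝ) : ℝ := |x| ^ β * Real.sign x

/-- `W_i(z) = (Σ_{j=1}^{i-1} |z_j|^{c/p_j})|z_i - v_{i-1}| +
|⌊z_i⌉^{c/p_i+1} - ⌊v_{i-1}⌉^{c/p_i+1}|/(c/p_i+1)` (paper 1-based index `i`). -/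
noncomputable def Wfun (r : ℕ) (κ c : ℝ) (l : ℕ → ℝ) : ℕ → (Fin r → ℝ) → ℝ
  | 0 => fun _ => 0
  | i + 1 => fun z =>
      Ssum r κ c i z * |coord r z i - vrec r κ c l i z| +
        |sgnPow (coord r z i) (c / (1 + (i : ℝ) * κ) + 1) -
            sgnPow (vrec r κ c l i z) (c / (1 + (i : ℝ) * κ) + 1)| /
          (c / (1 + (i : ℝ) * κ) + 1)

/-- The dilation `ζ_ε^p` with weights `p_i = 1 + (i-1)κ` (0-based: `p_j = 1 + jκ`). -/
noncomputable def dil (r : ℕ) (κ ε : ℝ) (z : Fin r → ℝ) : Fin r → ℝ :=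
  fun j => ε ^ (1 + (j : ℕ) * κ) * z j

/-- The Lyapunov function `V_κ(z) = Σ_{j=1}^{r} W_j(z)^{(c+1)/(c+p_j)}`. -/
noncomputable def Vfun (r : ℕ) (κ c : ℝ) (l : ℕ → ℝ) (z : Fin r → ℝ) : ℝ :=
  ∑ j ∈ Finset.range r, (Wfun r κ c l (j + 1) z) ^ ((c + 1) / (c + 1 + (j : ℝ) * κ))

/-- Uniform (in `κ ∈ [-1/r, 1/r]`) bound `W̄_i ≤ k_i |w_i|^{(c+1)/c}`: for each paper index
`i = i'+1` there is a constant `k_i > 0`, independent of `κ`, with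
`W_i^{(c+1)/(c+p_i)} ≤ k_i (Σ_{j=1}^i |z_j|^{c/p_j})^{(c+1)/c}` for all `z`. -/

private lemma ssum_nonneg (r : ℕ) (κ c : ℝ) (i : ℕ) (z : Fin r → ℝ) : 0 ≤ Ssum r κ c i z :=
  Finset.sum_nonneg fun _ _ => Real.rpow_nonneg (abs_nonneg _) _

private lemma ssum_mono (r : ℕ) (κ c : ℝ) {i j : ℕ} (h : i ≤ j) (z : Fin r → ℝ) :
    Ssum r κ c i z ≤ Ssum r κ c j z :=
  Finset.sum_le_sum_of_subset_of_nonneg (Finset.range_mono h)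
    fun _ _ _ => Real.rpow_nonneg (abs_nonneg _) _

private lemma abs_sign_le (x : ℝ) : |Real.sign x| ≤ 1 := by
  rcases lt_trichotomy x 0 with h|h|h
  · simp [Real.sign_of_neg h]
  · simp [h, Real.sign_zero]
  · simp [Real.sign_of_pos h]

private lemma abs_sgnPow_le (x β : ℝ) : |sgnPow x β| ≤ |x| ^ β := by
  rw [sgnPow, abs_mul, abs_of_nonneg (Real.rpow_nonneg (abs_nonneg x) β)]
  calc |x| ^ β * |Real.sign x| ≤ |x| ^ β * 1 := by
        gcongr
        · exact abs_sign_le x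
    _ = |x| ^ β := mul_one _

private lemma term_le_ssum (r : ℕ) (κ c : ℝ) (i : ℕ) (z : Fin r → ℝ) :
    |coord r z i| ^ (c / (1 + (i:ℝ) * κ)) ≤ Ssum r κ c (i+1) z :=
  Finset.single_le_sum (f := fun k => |coord r z k| ^ (c / (1 + (k:ℝ)*κ)))
    (fun _ _ => Real.rpow_nonneg (abs_nonneg _) _) (Finset.self_mem_range_succ i)

private lemma abs_coord_le (r : ℕ) (κ c : ℝ) (i : ℕ) (z : Fin r → ℝ)
    (hp : 0 < 1 + (i:ℝ)*κ) (hc : 0 < c) :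
    |coord r z i| ≤ (Ssum r κ c (i+1) z) ^ ((1 + (i:ℝ)*κ) / c) := by
  have h1 : |coord r z i| = (|coord r z i| ^ (c/(1 + (i:ℝ)*κ))) ^ ((1 + (i:ℝ)*κ)/c) := by
    rw [← Real.rpow_mul (abs_nonneg _)]
    rw [show c/(1 + (i:ℝ)*κ) * ((1 + (i:ℝ)*κ)/c) = 1 by field_simp, Real.rpow_one]
  rw [h1]
  exact Real.rpow_le_rpow (Real.rpow_nonneg (abs_nonneg _) _) (term_le_ssum r κ c i z)
    (by positivity)

private lemma abs_vrec_le (r : ℕ) (κ c : ℝ) (l : ℕ → ℝ) (i : ℕ) (z : Fin r → ℝ)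
    (L : ℝ) (hL : |l i| ≤ L) :
    |vrec r κ c l i z| ≤ L * (Ssum r κ c i z) ^ ((1 + (i:ℝ)*κ) / c) := by
  have hL0 : 0 ≤ L := le_trans (abs_nonneg _) hL
  cases i with
  | zero =>
      simp only [vrec, abs_zero]
      exact mul_nonneg hL0 (Real.rpow_nonneg (ssum_nonneg r κ c 0 z) _)
  | succ m =>
      have he : (1 + ((m:ℕ) + 1 : ℝ)*κ)/c = (1 + (m:ℝ)*κ + κ)/c := by push_cast; ring
      simp only [vrec]
      push_cast
      rw [he, abs_mul, abs_mul, abs_neg]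
      have hX : 0 ≤ (Ssum r κ c (m+1) z) ^ ((1 + (m:ℝ)*κ + κ)/c) :=
        Real.rpow_nonneg (ssum_nonneg r κ c (m+1) z) _
      rw [abs_of_nonneg hX]
      calc |l (m+1)| * (Ssum r κ c (m+1) z) ^ ((1 + (m:ℝ)*κ + κ)/c) *
            |Real.sign (coord r z m - vrec r κ c l m z)|
          ≤ L * (Ssum r κ c (m+1) z) ^ ((1 + (m:ℝ)*κ + κ)/c) * 1 := by
            gcongr
            · exact abs_sign_le _
        _ = L * (Ssum r κ c (m+1) z) ^ ((1 + (m:ℝ)*κ + κ)/c) := mul_one _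

set_option maxHeartbeats 1000000 in
theorem stmt13 (r : ℕ) (hr : 1 ≤ r) (c : ℝ) (hc : 2 ≤ c)
    (l : ℕ → ℝ) (hl : ∀ i, 1 ≤ i → i ≤ r → 0 < l i) :
    ∀ i, i < r → ∃ k : ℝ, 0 < k ∧
      ∀ κ : ℝ, -(1 / (r : ℝ)) ≤ κ → κ ≤ 1 / (r : ℝ) →
        ∀ z : Fin r → ℝ,
          (Wfun r κ c l (i + 1) z) ^ ((c + 1) / (c + 1 + (i : ℝ) * κ)) ≤
            k * (Ssum r κ c (i + 1) z) ^ ((c + 1) / c) := by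
  intro i hi
  have hc0 : (0:ℝ) < c := by linarith
  have hrpos : (0:ℝ) < (r:ℝ) := by exact_mod_cast hr
  set L : ℝ := max 1 |l i| with hLdef
  have hL1 : (1:ℝ) ≤ L := le_max_left _ _
  have hL0 : (0:ℝ) ≤ L := zero_le_one.trans hL1
  have hLp1 : (1:ℝ) ≤ L ^ (c * (r:ℝ) + 1) := by
    calc (1:ℝ) = L ^ (0:ℝ) := (Real.rpow_zero L).symm
      _ ≤ L ^ (c * (r:ℝ) + 1) := Real.rpow_le_rpow_of_exponent_le hL1 (by positivity)
  set K : ℝ := 2 + 2 * L ^ (c * (r:ℝ) + 1) with hKdef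
  have hK1 : (1:ℝ) ≤ K := by rw [hKdef]; nlinarith
  have hK0 : (0:ℝ) < K := lt_of_lt_of_le zero_lt_one hK1
  refine ⟨K ^ (2:ℝ), Real.rpow_pos_of_pos hK0 2, ?_⟩
  intro κ hκ1 hκ2 z
  set p : ℝ := 1 + (i:ℝ) * κ with hpdef
  have hi0 : (0:ℝ) ≤ (i:ℝ) := Nat.cast_nonneg i
  have hir : (i:ℝ) ≤ (r:ℝ) - 1 := by
    have : ((i:ℕ):ℝ) + 1 ≤ (r:ℝ) := by exact_mod_cast Nat.succ_le_of_lt hi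
    linarith
  have hik_lb : -((i:ℝ)/r) ≤ (i:ℝ)*κ := by
    have h := mul_le_mul_of_nonneg_left hκ1 hi0
    calc -((i:ℝ)/r) = (i:ℝ) * (-(1/r)) := by ring
      _ ≤ (i:ℝ)*κ := h
  have hik_ub : (i:ℝ)*κ ≤ (i:ℝ)/r := by
    have h := mul_le_mul_of_nonneg_left hκ2 hi0
    calc (i:ℝ)*κ ≤ (i:ℝ)*(1/r) := h
      _ = (i:ℝ)/r := by ring
  have hir' : (i:ℝ)/r ≤ 1 - 1/(r:ℝ) := by
    have h1 : (i:ℝ)/r ≤ ((r:ℝ)-1)/r := by gcongr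
    have h2 : ((r:ℝ)-1)/r = 1 - 1/(r:ℝ) := by field_simp
    linarith
  have hpr : 1/(r:ℝ) ≤ p := by rw [hpdef]; linarith
  have hp2 : p ≤ 2 := by rw [hpdef]; linarith
  have hp0 : (0:ℝ) < p := lt_of_lt_of_le (by positivity) hpr
  set S : ℝ := Ssum r κ c (i+1) z with hSdef
  set Si : ℝ := Ssum r κ c i z with hSidef
  set v : ℝ := vrec r κ c l i z with hvdef
  have hS0 : (0:ℝ) ≤ S := ssum_nonneg r κ c (i+1) z
  have hSi0 : (0:ℝ) ≤ Si := ssum_nonneg r κ c i z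
  have hSiS : Si ≤ S := ssum_mono r κ c (Nat.le_succ i) z
  have hz : |coord r z i| ≤ S ^ (p/c) := by
    have h := abs_coord_le r κ c i z (hpdef ▸ hp0) hc0
    rw [← hpdef] at h; exact h
  have hvb : |v| ≤ L * Si ^ (p/c) := by
    have h := abs_vrec_le r κ c l i z L (le_max_right _ _)
    rw [← hpdef] at h; exact h
  have hpc0 : (0:ℝ) < p/c := div_pos hp0 hc0
  have hvb' : |v| ≤ L * S ^ (p/c) :=
    hvb.trans (by gcongr)
  set β : ℝ := c/p + 1 with hβdef
  have hβ1 : (1:ℝ) ≤ β := by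
    have : (0:ℝ) < c/p := div_pos hc0 hp0
    rw [hβdef]; linarith
  have hβub : β ≤ c*(r:ℝ) + 1 := by
    have h1 : c * (r:ℝ) * (1/r) = c := by field_simp
    have h2 := mul_le_mul_of_nonneg_left hpr (show (0:ℝ) ≤ c*(r:ℝ) by positivity)
    have h3 : c/p ≤ c*(r:ℝ) := by
      rw [div_le_iff₀ hp0]; nlinarith
    rw [hβdef]; linarith
  have hSS : S * S^(p/c) = S^(1 + p/c) := by
    rw [Real.rpow_add' hS0 (by positivity : (1:ℝ) + p/c ≠ 0), Real.rpow_one]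
  have hpow : (S^(p/c))^β = S^(1+p/c) := by
    rw [← Real.rpow_mul hS0]
    congr 1
    rw [hβdef]
    field_simp
  have hWeq : Wfun r κ c l (i+1) z =
      Si * |coord r z i - v| + |sgnPow (coord r z i) β - sgnPow v β| / β := by
    simp only [Wfun]
    rfl
  clear_value L K p S Si v β
  have hW0 : 0 ≤ Wfun r κ c l (i+1) z := by
    rw [hWeq]
    exact add_nonneg (mul_nonneg hSi0 (abs_nonneg _))
      (div_nonneg (abs_nonneg _) (by linarith))
  have habs : |coord r z i - v| ≤ |coord r z i| + |v| := by
    calc |coord r z i - v| = |coord r z i + -v| := by rw [sub_eq_add_neg]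
      _ ≤ |coord r z i| + |-v| := abs_add_le _ _
      _ = |coord r z i| + |v| := by rw [abs_neg]
  have hWle : Wfun r κ c l (i+1) z ≤ K * S^(1+p/c) := by
    rw [hWeq]
    have t1 : Si * |coord r z i - v| ≤ (1 + L) * S^(1+p/c) := by
      calc Si * |coord r z i - v| ≤ S * (|coord r z i| + |v|) :=
            mul_le_mul hSiS habs (abs_nonneg _) hS0
        _ ≤ S * (S^(p/c) + L * S^(p/c)) := by gcongr
        _ = (1+L) * (S * S^(p/c)) := by ring
        _ = (1+L) * S^(1+p/c) := by rw [hSS]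
    have t2 : |sgnPow (coord r z i) β - sgnPow v β| / β ≤
        (1 + L^(c*(r:ℝ)+1)) * S^(1+p/c) := by
      have h2a : |sgnPow (coord r z i) β - sgnPow v β| ≤ |coord r z i|^β + |v|^β := by
        calc |sgnPow (coord r z i) β - sgnPow v β|
            = |sgnPow (coord r z i) β + -(sgnPow v β)| := by rw [sub_eq_add_neg]
          _ ≤ |sgnPow (coord r z i) β| + |-(sgnPow v β)| := abs_add_le _ _
          _ = |sgnPow (coord r z i) β| + |sgnPow v β| := by rw [abs_neg]
          _ ≤ |coord r z i|^β + |v|^β := add_le_add (abs_sgnPow_le _ _) (abs_sgnPow_le _ _)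
      have h2b : |coord r z i|^β ≤ S^(1+p/c) := by
        calc |coord r z i|^β ≤ (S^(p/c))^β :=
              Real.rpow_le_rpow (abs_nonneg _) hz (by linarith)
          _ = S^(1+p/c) := hpow
      have h2c : |v|^β ≤ L^(c*(r:ℝ)+1) * S^(1+p/c) := by
        calc |v|^β ≤ (L * S^(p/c))^β :=
              Real.rpow_le_rpow (abs_nonneg _) hvb' (by linarith)
          _ = L^β * (S^(p/c))^β := Real.mul_rpow hL0 (Real.rpow_nonneg hS0 _)
          _ ≤ L^(c*(r:ℝ)+1) * S^(1+p/c) := by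
              rw [hpow]
              exact mul_le_mul_of_nonneg_right
                (Real.rpow_le_rpow_of_exponent_le hL1 hβub) (Real.rpow_nonneg hS0 _)
      calc |sgnPow (coord r z i) β - sgnPow v β| / β
          ≤ |sgnPow (coord r z i) β - sgnPow v β| := div_le_self (abs_nonneg _) hβ1
        _ ≤ |coord r z i|^β + |v|^β := h2a
        _ ≤ S^(1+p/c) + L^(c*(r:ℝ)+1) * S^(1+p/c) := add_le_add h2b h2c
        _ = (1 + L^(c*(r:ℝ)+1)) * S^(1+p/c) := by ring
    calc Si * |coord r z i - v| + |sgnPow (coord r z i) β - sgnPow v β| / β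
        ≤ (1 + L) * S^(1+p/c) + (1 + L^(c*(r:ℝ)+1)) * S^(1+p/c) := add_le_add t1 t2
      _ = (2 + L + L^(c*(r:ℝ)+1)) * S^(1+p/c) := by ring
      _ ≤ K * S^(1+p/c) := by
          have hSg : (0:ℝ) ≤ S^(1+p/c) := Real.rpow_nonneg hS0 _
          have hLle : L ≤ L^(c*(r:ℝ)+1) := by
            calc L = L^(1:ℝ) := (Real.rpow_one L).symm
              _ ≤ L^(c*(r:ℝ)+1) := Real.rpow_le_rpow_of_exponent_le hL1 (by nlinarith [mul_pos hc0 hrpos])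
          apply mul_le_mul_of_nonneg_right _ hSg
          rw [hKdef]; linarith
  have hexp : c + 1 + (i:ℝ)*κ = c + p := by rw [hpdef]; ring
  rw [hexp]
  have hcp0 : (0:ℝ) < c + p := by linarith
  have hα0 : (0:ℝ) ≤ (c+1)/(c+p) := by positivity
  have hα2 : (c+1)/(c+p) ≤ 2 := by rw [div_le_iff₀ hcp0]; linarith
  calc (Wfun r κ c l (i+1) z) ^ ((c+1)/(c+p))
      ≤ (K * S^(1+p/c)) ^ ((c+1)/(c+p)) := Real.rpow_le_rpow hW0 hWle hα0
    _ = K^((c+1)/(c+p)) * (S^(1+p/c))^((c+1)/(c+p)) :=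
        Real.mul_rpow hK0.le (Real.rpow_nonneg hS0 _)
    _ = K^((c+1)/(c+p)) * S^((c+1)/c) := by
        have hee : (1 + p/c) * ((c+1)/(c+p)) = (c+1)/c := by
          field_simp
        rw [← Real.rpow_mul hS0, hee]
    _ ≤ K^(2:ℝ) * S^((c+1)/c) :=
        mul_le_mul_of_nonneg_right (Real.rpow_le_rpow_of_exponent_le hK1 hα2)
          (Real.rpow_nonneg hS0 _)
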